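/- Under Assumptions (A1)–(A3), there exist constants L1, L2, L3, L4 > 0, depending only on Y(0), φ, the drift b (through c1, c2, p, y_*, γ), λ and T (in particular not on Z, Λ or N), such that for every noise path Z with Hölder constant Λ, the pathwise solution Y satisfies φ(t) + L1/(L2 + Λ)^{1/(γλ+λ−1)} ≤ Y(t) ≤ L3 + L4·Λ for all t ∈ [0,T]. -/

import Mathlib

open MeasureTheory

open Set Real in
private lemma holder_continuousOn {T lam K : ℝ} (hlam : 0 < lam) (hK : 0 < K) {φ : ℝ → ℝ}
    (h : ∀ s ∈ Icc (0:ℝ) T, ∀ t ∈ Icc (0:ℝ) T, |φ t - φ s| ≤ K * |t - s| ^ lam) :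
    ContinuousOn φ (Icc (0:ℝ) T) := by
  intro s hs
  rw [Metric.continuousWithinAt_iff]
  intro ε hε
  refine ⟨(ε / (2 * K)) ^ (1 / lam), by positivity, fun {t} ht hdist => ?_⟩
  have h1 : |φ t - φ s| ≤ K * |t - s| ^ lam := h s hs t ht
  have h2 : |t - s| ^ lam < ((ε / (2 * K)) ^ (1 / lam)) ^ lam := by
    apply Real.rpow_lt_rpow (abs_nonneg _) ?_ hlam
    simpa [Real.dist_eq] using hdist
  have h3 : ((ε / (2 * K)) ^ (1 / lam) : ℝ) ^ lam = ε / (2 * K) := by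
    rw [← Real.rpow_mul (by positivity), one_div_mul_cancel hlam.ne', Real.rpow_one]
  rw [h3] at h2
  have h4 : K * |t - s| ^ lam < K * (ε / (2 * K)) := mul_lt_mul_of_pos_left h2 hK
  have h5 : K * (ε / (2 * K)) = ε / 2 := by field_simp
  rw [Real.dist_eq]
  linarith

open Set Real in
private lemma exists_last_eq {X : ℝ → ℝ} {t v : ℝ}
    (hX : ContinuousOn X (Icc 0 t)) (hne : ∃ u ∈ Icc (0:ℝ) t, X u = v) :
    ∃ r ∈ Icc (0:ℝ) t, X r = v ∧ ∀ u, r < u → u ≤ t → X u ≠ v := by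
  have hclosed : IsClosed (Icc (0:ℝ) t ∩ X ⁻¹' {v}) :=
    hX.preimage_isClosed_of_isClosed isClosed_Icc isClosed_singleton
  have hcomp : IsCompact (Icc (0:ℝ) t ∩ X ⁻¹' {v}) :=
    isCompact_Icc.of_isClosed_subset hclosed inter_subset_left
  have hne' : (Icc (0:ℝ) t ∩ X ⁻¹' {v}).Nonempty := by
    obtain ⟨u, hu, hXu⟩ := hne; exact ⟨u, hu, hXu⟩
  have hmem := hcomp.sSup_mem hne'
  refine ⟨sSup _, hmem.1, hmem.2, fun u hru hut hXu => ?_⟩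
  have hu : u ∈ Icc (0:ℝ) t ∩ X ⁻¹' {v} := ⟨⟨le_trans hmem.1.1 hru.le, hut⟩, hXu⟩
  exact absurd (le_csSup hcomp.bddAbove hu) (not_le.2 hru)

set_option maxHeartbeats 1000000 in
theorem stmt_3
    (T lam : ℝ) (hT : 0 < T) (hlam : lam ∈ Set.Ioo (0:ℝ) 1)
    (phi : ℝ → ℝ) (K : ℝ) (hK : 0 < K)
    (hphiH : ∀ s ∈ Set.Icc (0:ℝ) T, ∀ t ∈ Set.Icc (0:ℝ) T, |phi t - phi s| ≤ K * |t - s| ^ lam)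
    (b : ℝ → ℝ → ℝ) (c1 p c2 ystar gam : ℝ)
    (hc1 : 0 < c1) (hp : 1 < p) (hc2 : 0 < c2) (hystar : 0 < ystar)
    (hgam : 1 / lam - 1 < gam)
    (hA2cont : ContinuousOn (fun q : ℝ × ℝ => b q.1 q.2)
      {q : ℝ × ℝ | q.1 ∈ Set.Icc (0:ℝ) T ∧ phi q.1 < q.2})
    (hA2lip : ∀ ε : ℝ, 0 < ε → ε < 1 →
      ∀ t1 ∈ Set.Icc (0:ℝ) T, ∀ t2 ∈ Set.Icc (0:ℝ) T, ∀ y1 y2 : ℝ,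
        phi t1 + ε < y1 → phi t2 + ε < y2 →
        |b t1 y1 - b t2 y2| ≤ c1 / ε ^ p * (|y1 - y2| + |t1 - t2| ^ lam))
    (hA3 : ∀ t ∈ Set.Icc (0:ℝ) T, ∀ y : ℝ, phi t < y → y ≤ phi t + ystar →
      c2 / (y - phi t) ^ gam ≤ b t y)
    (Y0 : ℝ) (hA1 : phi 0 < Y0)
    :
    ∃ L1 L2 L3 L4 : ℝ, 0 < L1 ∧ 0 < L2 ∧ 0 < L3 ∧ 0 < L4 ∧
      ∀ (Z : ℝ → ℝ) (Lam : ℝ), 0 < Lam → Z 0 = 0 →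
        (∀ s ∈ Set.Icc (0:ℝ) T, ∀ t ∈ Set.Icc (0:ℝ) T, |Z t - Z s| ≤ Lam * |t - s| ^ lam) →
        ∀ Y : ℝ → ℝ, ContinuousOn Y (Set.Icc (0:ℝ) T) →
          (∀ t ∈ Set.Icc (0:ℝ) T, phi t < Y t) →
          (∀ t ∈ Set.Icc (0:ℝ) T, Y t = Y0 + (∫ s in (0:ℝ)..t, b s (Y s)) + Z t) →
          ∀ t ∈ Set.Icc (0:ℝ) T,
            phi t + L1 / (L2 + Lam) ^ (1 / (gam * lam + lam - 1)) ≤ Y t ∧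
            Y t ≤ L3 + L4 * Lam := by
  obtain ⟨hlam0, hlam1⟩ := hlam
  have tri1 : ∀ A B : ℝ, |A| ≤ |A - B| + |B| := fun A B => by
    calc |A| = |A - B + B| := by congr 1; ring
    _ ≤ |A - B| + |B| := abs_add_le _ _
  have tri2 : ∀ A B : ℝ, |A - B| ≤ |A| + |B| := fun A B => by
    rw [sub_eq_add_neg]
    exact (abs_add_le _ _).trans (by rw [abs_neg])
  have hT' : (0:ℝ) ≤ T := hT.le
  have hTl : 0 < T ^ lam := Real.rpow_pos_of_pos hT lam
  have h0T : (0:ℝ) ∈ Set.Icc (0:ℝ) T := Set.left_mem_Icc.2 hT'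
  have hth : 0 < gam * lam + lam - 1 := by
    have e2 : (1 / lam - 1) * lam = 1 - lam := by field_simp
    nlinarith [mul_lt_mul_of_pos_right hgam hlam0]
  have hqnn : (0:ℝ) ≤ 1 / (gam * lam + lam - 1) := le_of_lt (div_pos one_pos hth)
  have hgam0 : 0 < gam := by
    have h1 : 1 < 1 / lam := (one_lt_div hlam0).mpr hlam1
    linarith
  have hX0pos : 0 < Y0 - phi 0 := by linarith
  -- constants for the lower bound
  set A : ℝ := min ((Y0 - phi 0) / 2) (ystar / 2) with hAdef
  have hApos : 0 < A := lt_min (by linarith) (by linarith)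
  set E : ℝ := (c2 ^ lam / 2 ^ (gam * lam)) ^ (1 / (gam * lam + lam - 1)) with hEdef
  have hEpos : 0 < E := Real.rpow_pos_of_pos
    (div_pos (Real.rpow_pos_of_pos hc2 _) (Real.rpow_pos_of_pos two_pos _)) _
  set L2 : ℝ := K + 1 with hL2def
  have hL2pos : 0 < L2 := by rw [hL2def]; linarith
  set L1 : ℝ := min E (A * L2 ^ (1 / (gam * lam + lam - 1))) with hL1def
  have hL1pos : 0 < L1 := lt_min hEpos (mul_pos hApos (Real.rpow_pos_of_pos hL2pos _))
  -- constants for the upper bound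
  set eps : ℝ := min ystar 1 with hepsdef
  have hepspos : 0 < eps := lt_min hystar one_pos
  have hepsle1 : eps ≤ 1 := min_le_right _ _
  have hepsley : eps ≤ ystar := min_le_left _ _
  set C : ℝ := c1 / (eps / 2) ^ p with hCdef
  have hCpos : 0 < C := div_pos hc1 (Real.rpow_pos_of_pos (by linarith) _)
  set Mp : ℝ := |phi 0| + K * T ^ lam with hMpdef
  have hMppos : 0 < Mp := by
    rw [hMpdef]
    have := mul_pos hK hTl
    linarith [abs_nonneg (phi 0)]
  have hphiB : ∀ u ∈ Set.Icc (0:ℝ) T, |phi u| ≤ Mp := by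
    intro u hu
    have h1 := hphiH 0 h0T u hu
    have h2 : |u - 0| ^ lam ≤ T ^ lam := by
      rw [sub_zero, abs_of_nonneg hu.1]
      exact Real.rpow_le_rpow hu.1 hu.2 hlam0.le
    have h3 := tri1 (phi u) (phi 0)
    have h4 : K * |u - 0| ^ lam ≤ K * T ^ lam := mul_le_mul_of_nonneg_left h2 hK.le
    rw [hMpdef]
    linarith
  set B0 : ℝ := |b 0 (phi 0 + eps)| + C * (K * T ^ lam + T ^ lam) with hB0def
  have hB0pos : 0 < B0 := by
    rw [hB0def]
    have h1 : 0 < C * (K * T ^ lam + T ^ lam) :=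
      mul_pos hCpos (by nlinarith)
    linarith [abs_nonneg (b 0 (phi 0 + eps))]
  set M1 : ℝ := B0 + C * (Mp + eps) with hM1def
  have hM1pos : 0 < M1 := by
    rw [hM1def]
    have h2 : 0 ≤ C * (Mp + eps) := mul_nonneg hCpos.le (by linarith)
    linarith
  set P : ℝ := Mp + 1 + |Y0| + M1 / C with hPdef
  have hPpos : 0 < P := by
    rw [hPdef]
    have := div_pos hM1pos hCpos
    linarith [abs_nonneg Y0]
  set L3 : ℝ := P * Real.exp (C * T) + Mp + 1 with hL3def
  set L4 : ℝ := (2 * Real.exp (C * T) + 1) * T ^ lam with hL4def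
  have hL3pos : 0 < L3 := by
    rw [hL3def]
    have := mul_pos hPpos (Real.exp_pos (C * T))
    linarith
  have hL4pos : 0 < L4 := by
    rw [hL4def]
    have h := Real.exp_pos (C * T)
    have := mul_pos (show (0:ℝ) < 2 * Real.exp (C * T) + 1 by linarith) hTl
    linarith
  clear_value A E L2 L1 eps C Mp B0 M1 P L3 L4
  refine ⟨L1, L2, L3, L4, hL1pos, hL2pos, hL3pos, hL4pos, ?_⟩
  intro Z Lam hLam hZ0 hZH Y hYc hYphi hYeq t ht
  -- generalities
  have hphic : ContinuousOn phi (Set.Icc 0 T) := holder_continuousOn hlam0 hK hphiH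
  have hXc : ContinuousOn (fun u => Y u - phi u) (Set.Icc 0 T) := hYc.sub hphic
  set g : ℝ → ℝ := fun u => b u (Y u) with hgdef
  have hgc : ContinuousOn g (Set.Icc 0 T) := by
    have h1 : ContinuousOn (fun u => (u, Y u)) (Set.Icc (0:ℝ) T) := continuousOn_id.prodMk hYc
    exact hA2cont.comp h1 (fun u hu => ⟨hu, hYphi u hu⟩)
  have hgint : ∀ u ∈ Set.Icc (0:ℝ) T, ∀ v ∈ Set.Icc (0:ℝ) T,
      IntervalIntegrable g volume u v := by
    intro u hu v hv
    exact (hgc.mono (Set.uIcc_subset_Icc hu hv)).intervalIntegrable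
  have hYdiff : ∀ u ∈ Set.Icc (0:ℝ) T, ∀ v ∈ Set.Icc (0:ℝ) T,
      Y v - Y u = (∫ s in u..v, g s) + (Z v - Z u) := by
    intro u hu v hv
    have h1 := hYeq u hu
    have h2 := hYeq v hv
    have h3 := intervalIntegral.integral_add_adjacent_intervals
      (hgint 0 h0T u hu) (hgint u hu v hv)
    rw [h1, h2, ← h3]
    ring
  have hZb : ∀ u ∈ Set.Icc (0:ℝ) T, |Z u| ≤ Lam * T ^ lam := by
    intro u hu
    have h1 := hZH 0 h0T u hu
    rw [hZ0, sub_zero, sub_zero, abs_of_nonneg hu.1] at h1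
    have h2 : u ^ lam ≤ T ^ lam := Real.rpow_le_rpow hu.1 hu.2 hlam0.le
    have h3 : Lam * u ^ lam ≤ Lam * T ^ lam := mul_le_mul_of_nonneg_left h2 hLam.le
    linarith
  have hY00 : Y 0 = Y0 := by
    have h1 := hYeq 0 h0T
    simpa [hZ0, intervalIntegral.integral_same] using h1
  have htT : Set.Icc (0:ℝ) t ⊆ Set.Icc (0:ℝ) T := Set.Icc_subset_Icc le_rfl ht.2
  have hXct : ContinuousOn (fun u => Y u - phi u) (Set.Icc 0 t) := hXc.mono htT
  constructor
  · -- LOWER BOUND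
    have hKL : 0 < K + Lam := by linarith
    set a : ℝ := min A (E / (K + Lam) ^ (1 / (gam * lam + lam - 1))) with hadef
    have hapos : 0 < a :=
      lt_min hApos (div_pos hEpos (Real.rpow_pos_of_pos hKL _))
    clear_value a
    have haA : a ≤ A := by rw [hadef]; exact min_le_left _ _
    have haE : a ≤ E / (K + Lam) ^ (1 / (gam * lam + lam - 1)) := by
      rw [hadef]; exact min_le_right _ _
    have hstep1 : L1 / (L2 + Lam) ^ (1 / (gam * lam + lam - 1)) ≤ a := by
      have hden : (0:ℝ) < (L2 + Lam) ^ (1 / (gam * lam + lam - 1)) :=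
        Real.rpow_pos_of_pos (by linarith) _
      rw [hadef]
      apply le_min
      · rw [div_le_iff₀ hden]
        calc L1 ≤ A * L2 ^ (1 / (gam * lam + lam - 1)) := by
              rw [hL1def]; exact min_le_right _ _
        _ ≤ A * (L2 + Lam) ^ (1 / (gam * lam + lam - 1)) := by
            exact mul_le_mul_of_nonneg_left
              (Real.rpow_le_rpow hL2pos.le (by linarith) hqnn) hApos.le
      · apply div_le_div₀ hEpos.le ?_ (Real.rpow_pos_of_pos hKL _) ?_
        · rw [hL1def]; exact min_le_left _ _
        · apply Real.rpow_le_rpow hKL.le ?_ hqnn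
          rw [hL2def]; linarith
    have hmain : a ≤ Y t - phi t := by
      by_contra hcon
      push_neg at hcon
      have h2aX0 : 2 * a ≤ Y0 - phi 0 := by
        have h1 : A ≤ (Y0 - phi 0) / 2 := by rw [hAdef]; exact min_le_left _ _
        linarith
      have h2ay : 2 * a ≤ ystar := by
        have h1 : A ≤ ystar / 2 := by rw [hAdef]; exact min_le_right _ _
        linarith
      have hiv : (2*a) ∈ (fun u => Y u - phi u) '' Set.Icc 0 t := by
        refine intermediate_value_Icc' ht.1 hXct ⟨?_, ?_⟩
        · show Y t - phi t ≤ 2*a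
          linarith
        · show 2*a ≤ Y 0 - phi 0
          rw [hY00]; exact h2aX0
      obtain ⟨r0, hr0mem, hr0⟩ := hiv
      obtain ⟨r, hrmem, hXr, hlast⟩ := exists_last_eq hXct ⟨r0, hr0mem, hr0⟩
      have hrT : r ∈ Set.Icc (0:ℝ) T := htT hrmem
      have hrt : r < t := by
        rcases lt_or_eq_of_le hrmem.2 with h | h
        · exact h
        · exfalso
          rw [h] at hXr
          have hXr2 : Y t - phi t = 2*a := hXr
          linarith
      have hXle : ∀ u ∈ Set.Icc r t, Y u - phi u ≤ 2*a := by
        intro u hu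
        by_contra hgt
        push_neg at hgt
        have hiv2 : (2*a) ∈ (fun w => Y w - phi w) '' Set.Icc u t := by
          refine intermediate_value_Icc' hu.2
            (hXct.mono (Set.Icc_subset_Icc (le_trans hrmem.1 hu.1) le_rfl)) ⟨?_, ?_⟩
          · show Y t - phi t ≤ 2*a
            linarith
          · show 2*a ≤ Y u - phi u
            exact hgt.le
        obtain ⟨v, hv, hXv⟩ := hiv2
        have hvr : r < v := by
          rcases eq_or_lt_of_le hu.1 with h | h
          · exfalso
            rw [← h] at hgt
            linarith
          · exact lt_of_lt_of_le h hv.1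
        exact hlast v hvr hv.2 hXv
      set c : ℝ := c2 / (2*a) ^ gam with hcdef
      have hcpos : 0 < c := div_pos hc2 (Real.rpow_pos_of_pos (by linarith) _)
      clear_value c
      have hblow : ∀ u ∈ Set.Icc r t, c ≤ g u := by
        intro u hu
        have huT : u ∈ Set.Icc (0:ℝ) T := ⟨le_trans hrmem.1 hu.1, le_trans hu.2 ht.2⟩
        have hXu : phi u < Y u := hYphi u huT
        have hXu2 : Y u - phi u ≤ 2*a := hXle u hu
        have hA3' := hA3 u huT (Y u) hXu (by linarith)
        refine le_trans ?_ hA3'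
        rw [hcdef, div_le_div_iff₀ (Real.rpow_pos_of_pos (by linarith) _)
          (Real.rpow_pos_of_pos (by linarith) _)]
        exact mul_le_mul_of_nonneg_left
          (Real.rpow_le_rpow (by linarith) hXu2 hgam0.le) hc2.le
      have hint : c * (t - r) ≤ ∫ s in r..t, g s := by
        have h1 := intervalIntegral.integral_mono_on hrt.le
          (intervalIntegrable_const) (hgint r hrT t ht) hblow
        rw [intervalIntegral.integral_const, smul_eq_mul] at h1
        linarith
      have hZin : |Z t - Z r| ≤ Lam * (t - r) ^ lam := by
        have h1 := hZH r hrT t ht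
        rwa [abs_of_nonneg (by linarith : (0:ℝ) ≤ t - r)] at h1
      have hphin : |phi t - phi r| ≤ K * (t - r) ^ lam := by
        have h1 := hphiH r hrT t ht
        rwa [abs_of_nonneg (by linarith : (0:ℝ) ≤ t - r)] at h1
      have hYtr := hYdiff r hrT t ht
      have hexpand : (K + Lam) * (t - r) ^ lam
          = K * (t - r) ^ lam + Lam * (t - r) ^ lam := by ring
      have hkey : a + c * (t - r) < (K + Lam) * (t - r) ^ lam := by
        have hZ1 := (abs_le.mp hZin).1
        have hph1 := (abs_le.mp hphin).2
        have hXr' : Y r - phi r = 2*a := hXr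
        linarith [hint]
      have hdl : 0 < (t - r) ^ lam := Real.rpow_pos_of_pos (by linarith) _
      have hrev : (K + Lam) * (t - r) ^ lam ≤ a + c * (t - r) := by
        rcases le_or_gt ((K + Lam) * (t - r) ^ lam) a with h | h
        · have := mul_pos hcpos (show (0:ℝ) < t - r by linarith)
          linarith
        · have hlogE : Real.log E
              = (1 / (gam * lam + lam - 1)) * (lam * Real.log c2 - gam * lam * Real.log 2) := by
            rw [hEdef, Real.log_rpow
                (div_pos (Real.rpow_pos_of_pos hc2 _) (Real.rpow_pos_of_pos two_pos _)),
              Real.log_div (ne_of_gt (Real.rpow_pos_of_pos hc2 _))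
                (ne_of_gt (Real.rpow_pos_of_pos two_pos _)),
              Real.log_rpow hc2, Real.log_rpow two_pos]
          have hla : Real.log a
              ≤ (1 / (gam * lam + lam - 1)) * (lam * Real.log c2 - gam * lam * Real.log 2)
                - (1 / (gam * lam + lam - 1)) * Real.log (K + Lam) := by
            have h2 := Real.log_le_log hapos haE
            rwa [Real.log_div (ne_of_gt hEpos) (ne_of_gt (Real.rpow_pos_of_pos hKL _)),
              Real.log_rpow hKL, hlogE] at h2
          have hthla : (gam * lam + lam - 1) * Real.log a
              ≤ lam * Real.log c2 - gam * lam * Real.log 2 - Real.log (K + Lam) := by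
            have hmul := mul_le_mul_of_nonneg_left hla hth.le
            have hid : (gam * lam + lam - 1) *
                ((1 / (gam * lam + lam - 1)) * (lam * Real.log c2 - gam * lam * Real.log 2)
                  - (1 / (gam * lam + lam - 1)) * Real.log (K + Lam))
                = lam * Real.log c2 - gam * lam * Real.log 2 - Real.log (K + Lam) := by
              rw [← mul_sub, ← mul_assoc, mul_one_div_cancel hth.ne', one_mul]
            linarith [hid.le, hid.ge]
          have hlog1 : Real.log a < Real.log (K + Lam) + lam * Real.log (t - r) := by
            have h1 := Real.log_lt_log hapos h
            rwa [Real.log_mul (ne_of_gt hKL) (ne_of_gt hdl),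
              Real.log_rpow (by linarith)] at h1
          have hlogc : Real.log c = Real.log c2 - gam * (Real.log 2 + Real.log a) := by
            rw [hcdef, Real.log_div (ne_of_gt hc2)
                (ne_of_gt (Real.rpow_pos_of_pos (by linarith) gam)),
              Real.log_rpow (by linarith), Real.log_mul two_ne_zero (ne_of_gt hapos)]
          have htarget : Real.log ((K + Lam) * (t - r) ^ lam) ≤ Real.log (c * (t - r)) := by
            rw [Real.log_mul (ne_of_gt hKL) (ne_of_gt hdl), Real.log_rpow (by linarith),
              Real.log_mul (ne_of_gt hcpos) (by intro hh; rw [hh] at hdl; linarith [hrt] :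
                t - r ≠ 0), hlogc]
            by_contra hng
            push_neg at hng
            have hG2 : (1 - lam) * (Real.log a - Real.log (K + Lam))
                ≤ (1 - lam) * (lam * Real.log (t - r)) :=
              mul_le_mul_of_nonneg_left (by linarith) (by linarith)
            have hid2 : lam * ((Real.log c2 - gam * (Real.log 2 + Real.log a) + Real.log (t - r))
                - (Real.log (K + Lam) + lam * Real.log (t - r)))
                = ((lam * Real.log c2 - gam * lam * Real.log 2 - Real.log (K + Lam))
                    - (gam * lam + lam - 1) * Real.log a)
                  + ((1 - lam) * (lam * Real.log (t - r))
                    - (1 - lam) * (Real.log a - Real.log (K + Lam))) := by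
              ring
            have hneg := mul_neg_of_pos_of_neg hlam0
              (show (Real.log c2 - gam * (Real.log 2 + Real.log a) + Real.log (t - r))
                - (Real.log (K + Lam) + lam * Real.log (t - r)) < 0 by linarith)
            linarith [hthla, hG2, hid2.le, hid2.ge]
          calc (K + Lam) * (t - r) ^ lam
              = Real.exp (Real.log ((K + Lam) * (t - r) ^ lam)) :=
                (Real.exp_log (mul_pos hKL hdl)).symm
            _ ≤ Real.exp (Real.log (c * (t - r))) := Real.exp_le_exp.2 htarget
            _ = c * (t - r) := Real.exp_log (mul_pos hcpos (by linarith))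
            _ ≤ a + c * (t - r) := by linarith
      linarith
    linarith [hstep1, hmain]
  · -- UPPER BOUND
    rcases le_or_gt (Y t - phi t) eps with hcase | hcase
    · have h1 := hphiB t ht
      have h2 : phi t ≤ Mp := (le_abs_self _).trans h1
      have h3 : 0 < L4 * Lam := mul_pos hL4pos hLam
      have h4 : 0 < P * Real.exp (C * T) := mul_pos hPpos (Real.exp_pos _)
      rw [hL3def]
      linarith
    · -- Gronwall regime
      obtain ⟨r, hrmem, hYr, hXge⟩ : ∃ r, r ∈ Set.Icc (0:ℝ) t ∧ |Y r| ≤ Mp + 1 + |Y0| ∧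
          ∀ u ∈ Set.Icc r t, eps ≤ Y u - phi u := by
        by_cases hcr : ∃ u ∈ Set.Icc (0:ℝ) t, Y u - phi u = eps
        · obtain ⟨r, hr, hXr, hlast⟩ := exists_last_eq hXct hcr
          have hXr' : Y r - phi r = eps := hXr
          refine ⟨r, hr, ?_, ?_⟩
          · have h1 := hphiB r (htT hr)
            have h3 := tri1 (Y r) (phi r)
            have h4 : |Y r - phi r| = eps := by rw [hXr', abs_of_pos hepspos]
            linarith [abs_nonneg Y0]
          · intro u hu
            by_contra hlt
            push_neg at hlt
            have hiv2 : eps ∈ (fun w => Y w - phi w) '' Set.Icc u t := by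
              refine intermediate_value_Icc hu.2
                (hXct.mono (Set.Icc_subset_Icc (le_trans hr.1 hu.1) le_rfl)) ⟨?_, ?_⟩
              · show Y u - phi u ≤ eps
                exact hlt.le
              · show eps ≤ Y t - phi t
                exact hcase.le
            obtain ⟨v, hv, hXv⟩ := hiv2
            have hrv : r < v := by
              rcases eq_or_lt_of_le hu.1 with hh | hh
              · exfalso
                rw [← hh] at hlt
                linarith
              · exact lt_of_lt_of_le hh hv.1
            exact hlast v hrv hv.2 hXv
        · push_neg at hcr
          refine ⟨0, Set.left_mem_Icc.2 ht.1, ?_, ?_⟩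
          · rw [hY00]
            linarith [hMppos, abs_nonneg Y0]
          · intro u hu
            by_contra hlt
            push_neg at hlt
            have hiv2 : eps ∈ (fun w => Y w - phi w) '' Set.Icc u t := by
              refine intermediate_value_Icc hu.2
                (hXct.mono (Set.Icc_subset_Icc hu.1 le_rfl)) ⟨?_, ?_⟩
              · show Y u - phi u ≤ eps
                exact hlt.le
              · show eps ≤ Y t - phi t
                exact hcase.le
            obtain ⟨v, hv, hXv⟩ := hiv2
            exact hcr v ⟨le_trans hu.1 hv.1, hv.2⟩ hXv
      have hrT : r ∈ Set.Icc (0:ℝ) T := htT hrmem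
      -- extended integrand
      set proj : ℝ → ℝ := fun u => max 0 (min u T) with hprojdef
      have hprojmem : ∀ u, proj u ∈ Set.Icc (0:ℝ) T :=
        fun u => ⟨le_max_left _ _, max_le hT' (min_le_right _ _)⟩
      have hprojid : ∀ u ∈ Set.Icc (0:ℝ) T, proj u = u := by
        intro u hu
        show max 0 (min u T) = u
        rw [min_eq_left hu.2, max_eq_right hu.1]
      have hprojc : Continuous proj := continuous_const.max (continuous_id.min continuous_const)
      set gE : ℝ → ℝ := g ∘ proj with hgEdef
      have hgEc : Continuous gE := hgc.comp_continuous hprojc hprojmem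
      set f : ℝ → ℝ := fun u => Y0 + ∫ s in (0:ℝ)..u, gE s with hfdef
      have hfY : ∀ u ∈ Set.Icc (0:ℝ) T, f u = Y u - Z u := by
        intro u hu
        have hcongr : (∫ s in (0:ℝ)..u, gE s) = ∫ s in (0:ℝ)..u, g s := by
          apply intervalIntegral.integral_congr
          intro x hx
          have hx' : x ∈ Set.Icc (0:ℝ) T := by
            rw [Set.uIcc_of_le hu.1] at hx
            exact ⟨hx.1, le_trans hx.2 hu.2⟩
          show g (proj x) = g x
          rw [hprojid x hx']
        show Y0 + (∫ s in (0:ℝ)..u, gE s) = Y u - Z u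
        have h1 := hYeq u hu
        rw [hcongr]
        linarith
      have hfd : ∀ x : ℝ, HasDerivAt f (gE x) x := by
        intro x
        have h1 : HasDerivAt (fun u => ∫ s in (0:ℝ)..u, gE s) (gE x) x :=
          intervalIntegral.integral_hasDerivAt_right (hgEc.intervalIntegrable _ _)
            (hgEc.stronglyMeasurableAtFilter _ _) hgEc.continuousAt
        exact h1.const_add Y0
      set dG : ℝ := Mp + 1 + |Y0| + Lam * T ^ lam with hdGdef
      set eG : ℝ := M1 + C * (Lam * T ^ lam) with heGdef
      have hLamTl : 0 ≤ Lam * T ^ lam := mul_nonneg hLam.le hTl.le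
      clear_value dG eG
      have hdG0 : 0 ≤ dG := by
        rw [hdGdef]
        linarith [hMppos, abs_nonneg Y0]
      have heG0 : 0 ≤ eG / C := by
        apply div_nonneg ?_ hCpos.le
        rw [heGdef]
        have := mul_nonneg hCpos.le hLamTl
        linarith
      have hfc : ContinuousOn f (Set.Icc r t) :=
        fun x _ => (hfd x).continuousAt.continuousWithinAt
      have hfd' : ∀ x ∈ Set.Ico r t, HasDerivWithinAt f (gE x) (Set.Ici x) x :=
        fun x _ => (hfd x).hasDerivWithinAt
      have hfr : ‖f r‖ ≤ dG := by
        rw [Real.norm_eq_abs, hfY r hrT]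
        have h1 := hZb r hrT
        have h2 := tri2 (Y r) (Z r)
        rw [hdGdef]
        linarith
      have hbound : ∀ x ∈ Set.Ico r t, ‖gE x‖ ≤ C * ‖f x‖ + eG := by
        intro x hx
        have hxT : x ∈ Set.Icc (0:ℝ) T := ⟨le_trans hrmem.1 hx.1, le_trans hx.2.le ht.2⟩
        have hgEx : gE x = b x (Y x) := by
          show g (proj x) = b x (Y x)
          rw [hprojid x hxT]
        have hXx : eps ≤ Y x - phi x := hXge x ⟨hx.1, hx.2.le⟩
        have hphix := hphiB x hxT
        have heps2 : (0:ℝ) < eps / 2 := by linarith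
        have heps2' : eps / 2 < 1 := by linarith
        have hl1 := hA2lip (eps/2) heps2 heps2' x hxT x hxT (Y x) (phi x + eps)
          (by linarith) (by linarith)
        have hxx : |x - x| ^ lam = 0 := by
          rw [sub_self, abs_zero]
          exact Real.zero_rpow hlam0.ne'
        rw [hxx, ← hCdef] at hl1
        have hl2 := hA2lip (eps/2) heps2 heps2' x hxT 0 h0T (phi x + eps) (phi 0 + eps)
          (by linarith) (by linarith)
        rw [← hCdef] at hl2
        have hxl : |x - 0| ^ lam ≤ T ^ lam := by
          rw [sub_zero, abs_of_nonneg hxT.1]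
          exact Real.rpow_le_rpow hxT.1 hxT.2 hlam0.le
        have hphx : |phi x + eps - (phi 0 + eps)| ≤ K * T ^ lam := by
          have h1 := hphiH 0 h0T x hxT
          have h2 : phi x + eps - (phi 0 + eps) = phi x - phi 0 := by ring
          have h4 : K * |x - 0| ^ lam ≤ K * T ^ lam := mul_le_mul_of_nonneg_left hxl hK.le
          rw [h2]
          linarith
        have ht1 := tri1 (b x (Y x)) (b x (phi x + eps))
        have ht2 := tri1 (b x (phi x + eps)) (b 0 (phi 0 + eps))
        have habs : |Y x - (phi x + eps)| ≤ |Y x| + (Mp + eps) := by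
          have h1 := tri2 (Y x) (phi x + eps)
          have h2 := tri1 (phi x + eps) (phi x)
          have h3 : |phi x + eps - phi x| = eps := by
            rw [show phi x + eps - phi x = eps by ring, abs_of_pos hepspos]
          linarith
        have hfx : |Y x| ≤ |f x| + Lam * T ^ lam := by
          have h1 : f x = Y x - Z x := hfY x hxT
          have h2 := hZb x hxT
          have h3 := tri1 (Y x) (Z x)
          have h4 : |Y x - Z x| = |f x| := by rw [h1]
          linarith
        rw [Real.norm_eq_abs, Real.norm_eq_abs, hgEx]
        have hbx : |b x (phi x + eps) - b 0 (phi 0 + eps)| ≤ C * (K * T ^ lam + T ^ lam) := by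
          calc |b x (phi x + eps) - b 0 (phi 0 + eps)|
              ≤ C * (|phi x + eps - (phi 0 + eps)| + |x - 0| ^ lam) := hl2
          _ ≤ C * (K * T ^ lam + T ^ lam) :=
              mul_le_mul_of_nonneg_left (by linarith) hCpos.le
        have h5 : |b x (Y x) - b x (phi x + eps)| ≤ C * (|Y x| + (Mp + eps)) := by
          calc |b x (Y x) - b x (phi x + eps)| ≤ C * (|Y x - (phi x + eps)| + 0) := hl1
          _ ≤ C * (|Y x| + (Mp + eps)) :=
              mul_le_mul_of_nonneg_left (by linarith) hCpos.le
        have h6 : C * (|Y x| + (Mp + eps)) ≤ C * (|f x| + Lam * T ^ lam + (Mp + eps)) :=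
          mul_le_mul_of_nonneg_left (by linarith) hCpos.le
        have hiden : C * (|f x| + Lam * T ^ lam + (Mp + eps))
            = C * |f x| + C * (Lam * T ^ lam) + C * (Mp + eps) := by ring
        rw [heGdef, hM1def, hB0def]
        linarith
      have hgr := norm_le_gronwallBound_of_norm_deriv_right_le hfc hfd' hfr hbound t
        ⟨hrmem.2, le_refl t⟩
      have hgr' : ‖f t‖ ≤ dG * Real.exp (C * (t - r))
          + eG / C * (Real.exp (C * (t - r)) - 1) := by
        rw [gronwallBound_of_K_ne_0 hCpos.ne'] at hgr
        simpa using hgr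
      have hrt' : t - r ≤ T := by
        have h1 := hrmem.1
        have h2 := ht.2
        linarith
      have hexp1 : Real.exp (C * (t - r)) ≤ Real.exp (C * T) :=
        Real.exp_le_exp.2 (mul_le_mul_of_nonneg_left hrt' hCpos.le)
      have hexp0 : (1:ℝ) ≤ Real.exp (C * (t - r)) := by
        rw [← Real.exp_zero]
        apply Real.exp_le_exp.2
        exact mul_nonneg hCpos.le (by linarith [hrmem.2])
      have hft : ‖f t‖ ≤ (dG + eG / C) * Real.exp (C * T) := by
        have h1 : dG * Real.exp (C * (t - r)) ≤ dG * Real.exp (C * T) :=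
          mul_le_mul_of_nonneg_left hexp1 hdG0
        have h2 : eG / C * (Real.exp (C * (t - r)) - 1) ≤ eG / C * Real.exp (C * T) :=
          mul_le_mul_of_nonneg_left (by linarith) heG0
        rw [add_mul]
        linarith
      have hsum : dG + eG / C = P + 2 * (Lam * T ^ lam) := by
        rw [hdGdef, heGdef, hPdef, add_div, mul_div_cancel_left₀ _ hCpos.ne']
        ring
      have hZt := hZb t ht
      have hYt : Y t = f t + Z t := by
        have h1 := hfY t ht
        linarith
      rw [Real.norm_eq_abs] at hft
      have hfinal : Y t ≤ (P + 2 * (Lam * T ^ lam)) * Real.exp (C * T) + Lam * T ^ lam := by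
        rw [← hsum]
        have h1 : f t ≤ |f t| := le_abs_self _
        have h2 := (abs_le.mp hZt).2
        linarith
      have hid3 : (P + 2 * (Lam * T ^ lam)) * Real.exp (C * T) + Lam * T ^ lam
          = P * Real.exp (C * T) + ((2 * Real.exp (C * T) + 1) * T ^ lam) * Lam := by ring
      rw [hid3] at hfinal
      rw [hL3def, hL4def]
      linarith
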